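/- For a division of a necklace by cuts obtained from rounding continuous cuts, a single piece cannot lose value s/2 at both of its endpoints simultaneously: if both cuts bounding a piece are rounded toward the interior of the piece by exactly 1/2, then the right cut was a half-integer rounded right, a contradiction. Hence the total loss in a player's piece value from rounding both cuts is strictly less than s. -/
import Mathlib


/-- Rounding to the nearest integer, sending half-integers up. -/
noncomputable def roundHalfUp (x : ℝ) : ℤ := ⌊x + 1 / 2⌋

/-- Value of the subinterval `[a, b]` of a continuous cake `[0, k]` whose value is
spread uniformly over each unit interval, where `v i` is the (player's) value of the
`i`-th unit interval. -/
noncomputable def contVal {k : ℕ} (v : Fin k → ℝ) (a b : ℝ) : ℝ :=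
  ∑ i : Fin k, v i * max 0 (min b ((i : ℝ) + 1) - max a (i : ℝ))

lemma contVal_nonneg {k : ℕ} (v : Fin k → ℝ) (hv0 : ∀ i, 0 ≤ v i) (a b : ℝ) :
    0 ≤ contVal v a b := by
  apply Finset.sum_nonneg
  intro i _
  exact mul_nonneg (hv0 i) (le_max_left _ _)

lemma contVal_mono {k : ℕ} (v : Fin k → ℝ) (hv0 : ∀ i, 0 ≤ v i)
    {a a' b b' : ℝ} (ha : a' ≤ a) (hb : b ≤ b') :
    contVal v a b ≤ contVal v a' b' := by
  apply Finset.sum_le_sum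
  intro i _
  apply mul_le_mul_of_nonneg_left _ (hv0 i)
  apply max_le_max le_rfl
  have h1 : min b ((i : ℝ) + 1) ≤ min b' ((i : ℝ) + 1) := min_le_min hb le_rfl
  have h2 : max a' (i : ℝ) ≤ max a (i : ℝ) := max_le_max ha le_rfl
  linarith

lemma contVal_add {k : ℕ} (v : Fin k → ℝ) {a m b : ℝ} (h1 : a ≤ m) (h2 : m ≤ b) :
    contVal v a b = contVal v a m + contVal v m b := by
  unfold contVal
  rw [← Finset.sum_add_distrib]
  apply Finset.sum_congr rfl
  intro i _
  rw [← mul_add]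
  congr 1
  set c := (i : ℝ)
  set d := (i : ℝ) + 1
  rcases le_total m c with h|h <;> rcases le_total m d with h'|h' <;>
    simp [max_def, min_def] <;> split_ifs <;> linarith

lemma contVal_le {k : ℕ} (s : ℝ) (hs : 0 ≤ s) (v : Fin k → ℝ) (hvs : ∀ i, v i ≤ s)
    (hv0 : ∀ i, 0 ≤ v i) {a b : ℝ} (hab : a ≤ b) :
    contVal v a b ≤ s * (b - a) := by
  have key : ∀ c : ℝ, max 0 (min b (c+1) - max a c)
      = max a (min b (c+1)) - max a (min b c) := by
    intro c
    rcases le_total a c with h1|h1 <;> rcases le_total b c with h2|h2 <;>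
      simp [max_def, min_def] <;> split_ifs <;> linarith
  have step : contVal v a b ≤ s * ∑ i : Fin k, (max a (min b ((i:ℝ)+1)) - max a (min b (i:ℝ))) := by
    rw [Finset.mul_sum]
    apply Finset.sum_le_sum
    intro i _
    rw [← key]
    exact mul_le_mul_of_nonneg_right (hvs i) (le_max_left _ _)
  have tel : ∑ i : Fin k, (max a (min b ((i:ℝ)+1)) - max a (min b (i:ℝ)))
      = max a (min b (k:ℝ)) - max a (min b 0) := by
    rw [Fin.sum_univ_eq_sum_range (fun i => max a (min b ((i:ℝ)+1)) - max a (min b (i:ℝ)))]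
    have := Finset.sum_range_sub (fun n : ℕ => max a (min b (n:ℝ))) k
    simp only [Nat.cast_add, Nat.cast_one] at this ⊢
    · simpa using this
  rw [tel] at step
  have h1 : max a (min b (k:ℝ)) ≤ b := max_le hab (min_le_left _ _)
  have h2 : a ≤ max a (min b 0) := le_max_left _ _
  nlinarith [h1, h2]

/-- when rounding the two cuts bounding a piece `[x, y]` to the nearest
integers (half-integers rounding up), the piece cannot lose `s/2` at both endpoints
simultaneously — both cuts moving inward by exactly `1/2` would force the right cut
to be a half-integer rounded left, contradicting that half-integers round right —
hence the total loss of the piece's value is strictly less than `s`, where each unit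
interval is worth at most `s`. -/
theorem rounding_loss_lt_s
    (k : ℕ) (s : ℝ) (hs : 0 < s) (v : Fin k → ℝ)
    (hv0 : ∀ i, 0 ≤ v i) (hvs : ∀ i, v i ≤ s)
    (x y : ℝ) (hxy : x ≤ y) (hx0 : 0 ≤ x) (hyk : y ≤ (k : ℝ)) :
    (¬ (((roundHalfUp x : ℝ) = x + 1 / 2) ∧ ((roundHalfUp y : ℝ) = y - 1 / 2))) ∧
    contVal v x y - contVal v (roundHalfUp x : ℝ) (roundHalfUp y : ℝ) < s := by
  set x' : ℝ := (roundHalfUp x : ℝ) with hx'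
  set y' : ℝ := (roundHalfUp y : ℝ) with hy'
  have hx'' : x' = (⌊x + 1/2⌋ : ℝ) := rfl
  have hy'' : y' = (⌊y + 1/2⌋ : ℝ) := rfl
  have hxu : x' ≤ x + 1/2 := by rw [hx'']; exact Int.floor_le (x + 1/2)
  have hxl : x - 1/2 < x' := by
    have := Int.lt_floor_add_one (x + 1/2); rw [hx'']; linarith
  have hyu : y' ≤ y + 1/2 := by rw [hy'']; exact Int.floor_le (y + 1/2)
  have hyl : y - 1/2 < y' := by
    have := Int.lt_floor_add_one (y + 1/2); rw [hy'']; linarith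
  have hxy' : x' ≤ y' := by
    rw [hx'', hy'']
    exact_mod_cast Int.floor_le_floor (by linarith : x + 1/2 ≤ y + 1/2)
  constructor
  · rintro ⟨-, h2⟩
    linarith
  · rcases le_total x' y with hcase | hcase
    · rcases le_total x y' with hcase2 | hcase2
      · -- X := max x x', Y := min y y', X ≤ Y? Not necessarily; but here x' ≤ y and x ≤ y'.
        set X := max x x' with hX
        set Y := min y y' with hY
        have hXY : X ≤ Y := by
          apply max_le <;> apply le_min <;> first | exact hxy | exact hcase | exact hcase2 | exact hxy'
        have hxX : x ≤ X := le_max_left _ _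
        have hYy : Y ≤ y := min_le_left _ _
        have split1 : contVal v x y = contVal v x X + contVal v X Y + contVal v Y y := by
          rw [contVal_add v hxX (le_trans hXY hYy), contVal_add v hXY hYy]
          ring
        have hmid : contVal v X Y ≤ contVal v x' y' :=
          contVal_mono v hv0 (le_max_right _ _) (min_le_right _ _)
        have b1 : contVal v x X ≤ s * (X - x) := contVal_le s hs.le v hvs hv0 hxX
        have b2 : contVal v Y y ≤ s * (y - Y) := contVal_le s hs.le v hvs hv0 hYy
        have hXb : X - x ≤ 1/2 := by
          rcases max_cases x x' with ⟨h, _⟩ | ⟨h, _⟩ <;> rw [hX, h] <;> linarith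
        have hYb : y - Y < 1/2 := by
          rcases min_cases y y' with ⟨h, _⟩ | ⟨h, _⟩ <;> rw [hY, h] <;> linarith
        nlinarith
      · -- x > y' : then y - x < 1/2
        have hv' : 0 ≤ contVal v x' y' := contVal_nonneg v hv0 x' y'
        have b : contVal v x y ≤ s * (y - x) := contVal_le s hs.le v hvs hv0 hxy
        nlinarith
    · -- x' > y : then y - x < 1/2
      have hv' : 0 ≤ contVal v x' y' := contVal_nonneg v hv0 x' y'
      have b : contVal v x y ≤ s * (y - x) := contVal_le s hs.le v hvs hv0 hxy
      nlinarith
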